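/- Let φ(x) = min_i f_i(x) with f_i : ℝⁿ → ℝ continuously differentiable, x₀ ∈ ℝⁿ with 0 ∉ ∂̄φ(x₀) := co{∇f_i(x₀) : i ∈ R(x₀)}. Let w₀ be the point of maximal Euclidean norm in ∂̄φ(x₀) and g₀ = −w₀/‖w₀‖. Then the directional derivative of φ at x₀ in direction g₀ is strictly negative, and consequently φ(x₀ + αg₀) < φ(x₀) for all sufficiently small α > 0. -/

import Mathlib

open RealInnerProductSpace Filter

/-- Steepest (superdifferential) descent direction: if `0 ∉ ∂̄φ(x₀)` and `w₀` is the
maximal-norm point of `∂̄φ(x₀)`, then `g₀ = -w₀/‖w₀‖` is a strict descent direction: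
the directional derivative of `φ` at `x₀` in direction `g₀` is negative, and
`φ(x₀ + αg₀) < φ(x₀)` for all sufficiently small `α > 0`. -/
theorem steepest_descent_direction (n M : ℕ) (hM : 0 < M)
    (f : Fin M → EuclideanSpace ℝ (Fin n) → ℝ)
    (hf : ∀ i, ContDiff ℝ 1 (f i))
    (φ : EuclideanSpace ℝ (Fin n) → ℝ)
    (hφ : ∀ x, φ x = ⨅ i, f i x)
    (x₀ : EuclideanSpace ℝ (Fin n))
    (D : Set (EuclideanSpace ℝ (Fin n)))
    (hD : D = convexHull ℝ {w : EuclideanSpace ℝ (Fin n) |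
      ∃ i : Fin M, f i x₀ = φ x₀ ∧ w = gradient (f i) x₀})
    (h0 : (0 : EuclideanSpace ℝ (Fin n)) ∉ D)
    (w₀ : EuclideanSpace ℝ (Fin n)) (hw₀ : w₀ ∈ D)
    (hmax : ∀ w ∈ D, ‖w‖ ≤ ‖w₀‖)
    (g₀ : EuclideanSpace ℝ (Fin n)) (hg₀ : g₀ = -(‖w₀‖⁻¹ • w₀)) :
    sInf ((fun w => ⟪w, g₀⟫) '' D) < 0 ∧
    Tendsto (fun α : ℝ => (φ (x₀ + α • g₀) - φ x₀) / α) (nhdsWithin 0 (Set.Ioi 0))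
      (nhds (sInf ((fun w => ⟪w, g₀⟫) '' D))) ∧
    ∀ᶠ α : ℝ in nhdsWithin 0 (Set.Ioi 0), φ (x₀ + α • g₀) < φ x₀ := by
  classical
  have hMne : Nonempty (Fin M) := ⟨⟨0, hM⟩⟩
  -- the min is attained at every point
  have hattain : ∀ x, ∃ j, f j x = φ x ∧ ∀ i, f j x ≤ f i x := by
    intro x
    obtain ⟨j, hj⟩ := Finite.exists_min (fun i => f i x)
    refine ⟨j, ?_, hj⟩
    rw [hφ]
    exact le_antisymm (le_ciInf hj) (ciInf_le (Finite.bddBelow_range _) j)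
  set c : Fin M → ℝ := fun i => ⟪gradient (f i) x₀, g₀⟫ with hc
  obtain ⟨j₀, hj₀, hj₀min⟩ := hattain x₀
  set A : Finset (Fin M) := Finset.univ.filter (fun i => f i x₀ = φ x₀) with hA
  have hmemA : ∀ i, i ∈ A ↔ f i x₀ = φ x₀ := by intro i; simp [hA]
  have hAne : A.Nonempty := ⟨j₀, (hmemA j₀).2 hj₀⟩
  set m : ℝ := A.inf' hAne c with hm
  -- m is a lower bound for the linear functional on D
  have hlow : ∀ w ∈ D, m ≤ ⟪w, g₀⟫ := by
    rw [hD]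
    intro w hw
    have hsub : convexHull ℝ {w : EuclideanSpace ℝ (Fin n) |
        ∃ i : Fin M, f i x₀ = φ x₀ ∧ w = gradient (f i) x₀} ⊆ {w | m ≤ ⟪w, g₀⟫} := by
      apply convexHull_min
      · rintro w ⟨i, hi, rfl⟩
        exact Finset.inf'_le c ((hmemA i).2 hi)
      · refine convex_halfSpace_ge ?_ m
        exact ⟨fun x y => inner_add_left x y g₀, fun r x => real_inner_smul_left x g₀ r⟩
    exact hsub hw
  obtain ⟨i₀, hi₀A, hi₀⟩ := Finset.exists_mem_eq_inf' hAne c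
  have hfi₀x₀ : f i₀ x₀ = φ x₀ := (hmemA i₀).1 hi₀A
  have hgradmem : gradient (f i₀) x₀ ∈ D := by
    rw [hD]; exact subset_convexHull ℝ _ ⟨i₀, hfi₀x₀, rfl⟩
  have hsInf : sInf ((fun w => ⟪w, g₀⟫) '' D) = m := by
    refine le_antisymm ?_ ?_
    · refine csInf_le ⟨m, ?_⟩ ⟨gradient (f i₀) x₀, hgradmem, hi₀.symm⟩
      rintro y ⟨w, hw, rfl⟩
      exact hlow w hw
    · refine le_csInf ⟨⟪w₀, g₀⟫, w₀, hw₀, rfl⟩ ?_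
      rintro y ⟨w, hw, rfl⟩
      exact hlow w hw
  have hw₀ne : w₀ ≠ 0 := fun h => h0 (h ▸ hw₀)
  have hw₀norm : (0:ℝ) < ‖w₀‖ := norm_pos_iff.2 hw₀ne
  have hcomp : ⟪w₀, g₀⟫ = -‖w₀‖ := by
    rw [hg₀, inner_neg_right, real_inner_smul_right, real_inner_self_eq_norm_mul_norm,
      inv_mul_cancel_left₀ (ne_of_gt hw₀norm)]
  have hm_neg : m < 0 := by
    have h1 : m ≤ ⟪w₀, g₀⟫ := hlow w₀ hw₀
    rw [hcomp] at h1
    linarith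
  -- slope limits for each function
  have hTi : ∀ i, Tendsto (fun α : ℝ => (f i (x₀ + α • g₀) - f i x₀) / α)
      (nhdsWithin 0 (Set.Ioi 0)) (nhds (c i)) := by
    intro i
    have hdiff : DifferentiableAt ℝ (f i) x₀ :=
      ((hf i).differentiable one_ne_zero).differentiableAt
    have hfd : HasFDerivAt (f i)
        (InnerProductSpace.toDual ℝ _ (gradient (f i) x₀)) x₀ :=
      hdiff.hasGradientAt.hasFDerivAt
    have h1 : HasDerivAt (fun α : ℝ => x₀ + α • g₀) g₀ 0 := by
      simpa using ((hasDerivAt_id (0:ℝ)).smul_const g₀).const_add x₀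
    have hfd' : HasFDerivAt (f i) (InnerProductSpace.toDual ℝ _ (gradient (f i) x₀))
        ((fun α : ℝ => x₀ + α • g₀) 0) := by simpa using hfd
    have hline : HasDerivAt (fun α : ℝ => f i (x₀ + α • g₀)) (c i) 0 := by
      have := hfd'.comp_hasDerivAt 0 h1
      exact this.congr_deriv (by simp [hc, InnerProductSpace.toDual_apply_apply])
    have hs := hasDerivAt_iff_tendsto_slope.1 hline
    have hs' : Tendsto (slope (fun α : ℝ => f i (x₀ + α • g₀)) 0)
        (nhdsWithin 0 (Set.Ioi 0)) (nhds (c i)) :=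
      hs.mono_left (nhdsWithin_mono 0 (fun x hx => ne_of_gt hx))
    refine hs'.congr' ?_
    filter_upwards [self_mem_nhdsWithin] with α hα
    simp [slope_def_field]
  -- continuity of each f i along the ray
  have hcont : ∀ i, Tendsto (fun α : ℝ => f i (x₀ + α • g₀))
      (nhdsWithin 0 (Set.Ioi 0)) (nhds (f i x₀)) := by
    intro i
    have h1 : Continuous (fun α : ℝ => f i (x₀ + α • g₀)) :=
      (hf i).continuous.comp (continuous_const.add (continuous_id.smul continuous_const))
    have := (h1.tendsto 0).mono_left (nhdsWithin_le_nhds (s := Set.Ioi (0:ℝ)))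
    simpa using this
  have hφle : ∀ x i, φ x ≤ f i x := by
    intro x i
    obtain ⟨j, hj, hjm⟩ := hattain x
    rw [← hj]; exact hjm i
  -- the main limit
  have htend : Tendsto (fun α : ℝ => (φ (x₀ + α • g₀) - φ x₀) / α)
      (nhdsWithin 0 (Set.Ioi 0)) (nhds m) := by
    rw [Metric.tendsto_nhds]
    intro ε hε
    have hE1 : ∀ᶠ α : ℝ in nhdsWithin 0 (Set.Ioi 0),
        ∀ i, i ∈ A → |(f i (x₀ + α • g₀) - f i x₀) / α - c i| < ε := by
      rw [eventually_all]
      intro i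
      by_cases hiA : i ∈ A
      · have := Metric.tendsto_nhds.1 (hTi i) ε hε
        filter_upwards [this] with α hα _
        simpa [Real.dist_eq] using hα
      · filter_upwards with α h; exact absurd h hiA
    have hE2 : ∀ᶠ α : ℝ in nhdsWithin 0 (Set.Ioi 0),
        ∀ i, i ∉ A → φ x₀ + α * (m - ε) < f i (x₀ + α • g₀) := by
      rw [eventually_all]
      intro i
      by_cases hiA : i ∈ A
      · filter_upwards with α h; exact absurd hiA h
      · have hlt : φ x₀ < f i x₀ :=
          lt_of_le_of_ne (hφle x₀ i) (fun h => hiA ((hmemA i).2 h.symm))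
        have hL : Tendsto (fun α : ℝ => φ x₀ + α * (m - ε))
            (nhdsWithin 0 (Set.Ioi 0)) (nhds (φ x₀)) := by
          have : Tendsto (fun α : ℝ => α * (m - ε)) (nhdsWithin 0 (Set.Ioi 0)) (nhds 0) := by
            have h : Tendsto (fun α : ℝ => α * (m - ε)) (nhds 0) (nhds (0 * (m - ε))) :=
              (continuous_id.mul continuous_const).tendsto 0
            simpa using h.mono_left (nhdsWithin_le_nhds (s := Set.Ioi (0:ℝ)))
          simpa using this.const_add (φ x₀)
        have := hL.eventually_lt (hcont i) hlt
        filter_upwards [this] with α hα _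
        exact hα
    filter_upwards [hE1, hE2, self_mem_nhdsWithin] with α h1 h2 hα
    have hαpos : (0:ℝ) < α := hα
    rw [Real.dist_eq, abs_sub_lt_iff]
    obtain ⟨j, hj, hjm⟩ := hattain (x₀ + α • g₀)
    constructor
    · -- upper bound via i₀
      have hle : φ (x₀ + α • g₀) ≤ f i₀ (x₀ + α • g₀) := hφle _ i₀
      have h1i := (abs_sub_lt_iff.1 (h1 i₀ hi₀A)).1
      linarith [(div_le_div_iff_of_pos_right hαpos).2 (by linarith [hle, hfi₀x₀.ge, hfi₀x₀.le] :
        φ (x₀ + α • g₀) - φ x₀ ≤ f i₀ (x₀ + α • g₀) - f i₀ x₀), hi₀ ▸ h1i]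
    · by_cases hjA : j ∈ A
      · have h1j := (abs_sub_lt_iff.1 (h1 j hjA)).2
        have hfjx₀ : f j x₀ = φ x₀ := (hmemA j).1 hjA
        have hmc : m ≤ c j := Finset.inf'_le c hjA
        have heq : (φ (x₀ + α • g₀) - φ x₀) / α = (f j (x₀ + α • g₀) - f j x₀) / α := by
          rw [hj, hfjx₀]
        rw [heq]
        linarith
      · have h2j := h2 j hjA
        have : m - ε < (φ (x₀ + α • g₀) - φ x₀) / α := by
          rw [lt_div_iff₀ hαpos, ← hj]
          nlinarith
        linarith
  refine ⟨hsInf ▸ hm_neg, hsInf ▸ htend, ?_⟩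
  have hev : ∀ᶠ α : ℝ in nhdsWithin 0 (Set.Ioi 0),
      (φ (x₀ + α • g₀) - φ x₀) / α < 0 := htend.eventually (gt_mem_nhds hm_neg)
  filter_upwards [hev, self_mem_nhdsWithin] with α hq hα
  have hαpos : (0:ℝ) < α := hα
  rcases div_neg_iff.1 hq with ⟨_, h⟩ | ⟨h, _⟩
  · linarith
  · linarith
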